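/- For 1 ≤ n ≤ r put w_n^+ = u_{−n} + p·u_n and w_n^− = u_{−n} − p^{−1}·u_n, and also w_0^+ = u_0. Then for all i ∈ {1/2, 3/2, …, r−1/2} and 1 ≤ n ≤ r: f_{1/2}(u_0) = u_{−1} + p·u_1; f_i(w_n^+) = δ_{i,n+1/2}·(u_{−n−1} + p·u_{n+1}); e_i(w_n^+) = δ_{i,n−1/2}·(p^{−δ_{i,1/2}}·u_{−n+1} + p·u_{n−1}); f_i(w_n^−) = δ_{i,n+1/2}·(u_{−n−1} − p^{−1}·u_{n+1}); e_i(w_n^−) = δ_{i,n−1/2}·(p^{−δ_{i,1/2}}·u_{−n+1} − p^{−1}·u_{n−1}). Consequently V^+ = span( {u_0} ∪ {w_n^+} ) and V^− = span{w_n^−} are each invariant under all of the operators e_i, f_i, k_i, k_i^{−1}, and V = V^+ ⊕ V^− as modules for the algebra generated by these operators. -/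

import Mathlib

open scoped BigOperators

attribute [local instance] Classical.propDecidable

noncomputable section

/-- The field `ℚ(p,q)` of rational functions in two indeterminates over `ℚ`. -/
abbrev K2 : Type := FractionRing (MvPolynomial (Fin 2) ℚ)

/-- The indeterminate `p`. -/
noncomputable def pp : K2 := algebraMap (MvPolynomial (Fin 2) ℚ) K2 (MvPolynomial.X 0)

/-- The indeterminate `q`. -/
noncomputable def qq : K2 := algebraMap (MvPolynomial (Fin 2) ℚ) K2 (MvPolynomial.X 1)

/-- The index set `I = {-r, -r+1, ..., r}` of integers, as a subtype of `ℚ`. -/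
def IIdx (r : ℕ) : Type := {a : ℚ // ∃ k : ℤ, -(r : ℤ) ≤ k ∧ k ≤ r ∧ a = (k : ℚ)}

instance (r : ℕ) : DecidableEq (IIdx r) := fun a b =>
  decidable_of_iff (a.1 = b.1) Subtype.ext_iff.symm

/-- Negation on the index set. -/
def IIdx.neg {r : ℕ} (a : IIdx r) : IIdx r :=
  ⟨-a.1, by
    obtain ⟨k, h1, h2, h3⟩ := a.2
    exact ⟨-k, by omega, by omega, by rw [h3]; push_cast; ring⟩⟩

/-- Interpret a rational number as an element of the index set (junk value if out of range). -/
def toII (r : ℕ) (a : ℚ) : IIdx r :=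
  if h : ∃ k : ℤ, -(r : ℤ) ≤ k ∧ k ≤ r ∧ a = (k : ℚ) then ⟨a, h⟩
  else ⟨0, ⟨0, by omega, by omega, by norm_num⟩⟩

/-- The natural representation `V`, the free `K2`-module on the index set `I`. -/
abbrev V1 (r : ℕ) : Type := IIdx r →₀ K2

/-- The basis vector `u_a` of `V`. -/
noncomputable def uv {r : ℕ} (a : IIdx r) : V1 r := Finsupp.single a 1

/-- `u_a` for a rational label. -/
noncomputable def uvq (r : ℕ) (a : ℚ) : V1 r := uv (toII r a)

/-- The set of indices `{1/2, 3/2, …, r-1/2}` of the coideal generators. -/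
def Ijset (r : ℕ) : Set ℚ := {i | ∃ k : ℕ, k + 1 ≤ r ∧ i = (k : ℚ) + 1/2}

/-- `K_i`-weight of the basis vector `u_a`: `K_i u_a = q ^ kexp i a • u_a`. -/
def kexp (i a : ℚ) : ℤ :=
  (if a = i - 1/2 then 1 else 0) - (if a = i + 1/2 then 1 else 0)

/-- The operator `E_i` on `V`: `E_i u_a = δ_{a, i+1/2} u_{i-1/2}`. -/
noncomputable def E1 (r : ℕ) (i : ℚ) : Module.End K2 (V1 r) :=
  Finsupp.lift (V1 r) K2 (IIdx r) (fun a => if a.1 = i + 1/2 then uvq r (i - 1/2) else 0)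

/-- The operator `F_i` on `V`: `F_i u_a = δ_{a, i-1/2} u_{i+1/2}`. -/
noncomputable def F1 (r : ℕ) (i : ℚ) : Module.End K2 (V1 r) :=
  Finsupp.lift (V1 r) K2 (IIdx r) (fun a => if a.1 = i - 1/2 then uvq r (i + 1/2) else 0)

/-- The operator `K_i` on `V`. -/
noncomputable def K1 (r : ℕ) (i : ℚ) : Module.End K2 (V1 r) :=
  Finsupp.lift (V1 r) K2 (IIdx r) (fun a => (qq ^ kexp i a.1 : K2) • uv a)

/-- The operator `K_i⁻¹` on `V`. -/
noncomputable def K1inv (r : ℕ) (i : ℚ) : Module.End K2 (V1 r) :=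
  Finsupp.lift (V1 r) K2 (IIdx r) (fun a => (qq ^ (-(kexp i a.1)) : K2) • uv a)

/-- The coideal operator `e_i` on `V`: `e_i = E_i + F_{-i} K_i⁻¹` for `i ≠ 1/2`, and
`e_{1/2} = E_{1/2} + p⁻¹ F_{-1/2} K_{1/2}⁻¹`. -/
noncomputable def e1 (r : ℕ) (i : ℚ) : Module.End K2 (V1 r) :=
  E1 r i + (pp ^ (-(if i = 1/2 then (1:ℤ) else 0))) • (F1 r (-i) * K1inv r i)

/-- The coideal operator `f_i` on `V`: `f_i = E_{-i} + K_{-i}⁻¹ F_i` for `i ≠ 1/2`, and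
`f_{1/2} = E_{-1/2} + p K_{-1/2}⁻¹ F_{1/2}`. -/
noncomputable def f1 (r : ℕ) (i : ℚ) : Module.End K2 (V1 r) :=
  E1 r (-i) + (pp ^ (if i = 1/2 then (1:ℤ) else 0)) • (K1inv r (-i) * F1 r i)

/-- The coideal operator `k_i = K_i K_{-i}⁻¹` on `V`. -/
noncomputable def k1 (r : ℕ) (i : ℚ) : Module.End K2 (V1 r) :=
  K1 r i * K1inv r (-i)

/-- The inverse `k_i⁻¹ = K_i⁻¹ K_{-i}` on `V`. -/
noncomputable def k1inv (r : ℕ) (i : ℚ) : Module.End K2 (V1 r) :=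
  K1inv r i * K1 r (-i)

/-- `w_n⁺ = u_{-n} + p u_n`. -/
noncomputable def wplus (r : ℕ) (n : ℕ) : V1 r := uvq r (-(n : ℚ)) + pp • uvq r (n : ℚ)

/-- `w_n⁻ = u_{-n} - p⁻¹ u_n`. -/
noncomputable def wminus (r : ℕ) (n : ℕ) : V1 r := uvq r (-(n : ℚ)) - pp⁻¹ • uvq r (n : ℚ)

/-- `V⁺ = span ({u_0} ∪ {w_n⁺})` and `V⁻ = span {w_n⁻}`. -/
noncomputable def VplusO (r : ℕ) : Submodule K2 (V1 r) :=
  Submodule.span K2 ({uvq r 0} ∪ {x | ∃ n : ℕ, 1 ≤ n ∧ n ≤ r ∧ x = wplus r n})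

noncomputable def VminusO (r : ℕ) : Submodule K2 (V1 r) :=
  Submodule.span K2 {x | ∃ n : ℕ, 1 ≤ n ∧ n ≤ r ∧ x = wminus r n}

section Aux
variable (r : ℕ)

lemma lift_single (f : IIdx r → V1 r) (a : IIdx r) (c : K2) :
    Finsupp.lift (V1 r) K2 (IIdx r) f (Finsupp.single a c) = c • f a := by
  simp [Finsupp.lift_apply, Finsupp.sum_single_index]

lemma toII_val {a : ℚ} (k : ℤ) (h1 : -(r:ℤ) ≤ k) (h2 : k ≤ r) (h3 : a = (k:ℚ)) :
    (toII r a).1 = a := by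
  have hx : ∃ k' : ℤ, -(r:ℤ) ≤ k' ∧ k' ≤ r ∧ a = (k':ℚ) := ⟨k, h1, h2, h3⟩
  have htoII : toII r a = ⟨a, hx⟩ := dif_pos hx
  rw [htoII]

lemma pp_ne_zero : pp ≠ 0 := by
  rw [pp]
  simp only [ne_eq, IsFractionRing.to_map_eq_zero_iff]
  exact MvPolynomial.X_ne_zero 0

variable {r}

lemma E1_uvq (i : ℚ) {a : ℚ} (k : ℤ) (h1 : -(r:ℤ) ≤ k) (h2 : k ≤ r) (h3 : a = (k:ℚ)) :
    E1 r i (uvq r a) = if a = i + 1/2 then uvq r (i - 1/2) else 0 := by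
  rw [uvq, uv, E1, lift_single, one_smul, toII_val r k h1 h2 h3]

lemma F1_uvq (i : ℚ) {a : ℚ} (k : ℤ) (h1 : -(r:ℤ) ≤ k) (h2 : k ≤ r) (h3 : a = (k:ℚ)) :
    F1 r i (uvq r a) = if a = i - 1/2 then uvq r (i + 1/2) else 0 := by
  rw [uvq, uv, F1, lift_single, one_smul, toII_val r k h1 h2 h3]

lemma K1inv_uvq (i : ℚ) {a : ℚ} (k : ℤ) (h1 : -(r:ℤ) ≤ k) (h2 : k ≤ r) (h3 : a = (k:ℚ)) :
    K1inv r i (uvq r a) = (qq ^ (-(kexp i a)) : K2) • uvq r a := by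
  rw [uvq, uv, K1inv, lift_single, one_smul, toII_val r k h1 h2 h3]; rfl

lemma K1_uvq (i : ℚ) {a : ℚ} (k : ℤ) (h1 : -(r:ℤ) ≤ k) (h2 : k ≤ r) (h3 : a = (k:ℚ)) :
    K1 r i (uvq r a) = (qq ^ (kexp i a) : K2) • uvq r a := by
  rw [uvq, uv, K1, lift_single, one_smul, toII_val r k h1 h2 h3]; rfl

end Aux
section Aux2
variable {r : ℕ}

lemma qq_ne_zero : qq ≠ 0 := by
  rw [qq]
  simp only [ne_eq, IsFractionRing.to_map_eq_zero_iff]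
  exact MvPolynomial.X_ne_zero 1

lemma mhalf_iff (m : ℕ) : ((m:ℚ) + 1/2 = 1/2) ↔ (m = 0) := by
  constructor
  · intro h
    have : (m:ℚ) = 0 := by linarith
    exact_mod_cast this
  · intro h; subst h; norm_num

lemma e1_uvq (m : ℕ) (hm : m + 1 ≤ r) {t : ℤ} {a : ℚ} (h1 : -(r:ℤ) ≤ t) (h2 : t ≤ r) (h3 : a = (t:ℚ)) :
    e1 r ((m:ℚ) + 1/2) (uvq r a) =
      (if t = (m:ℤ) + 1 then uvq r (m:ℚ) else 0)
      + (if t = -((m:ℤ) + 1) then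
          (pp ^ (-(if m = 0 then (1:ℤ) else 0))) • uvq r (-(m:ℚ)) else 0) := by
  subst h3
  rw [e1, LinearMap.add_apply, LinearMap.smul_apply, Module.End.mul_apply,
    K1inv_uvq _ t h1 h2 rfl, map_smul, F1_uvq _ t h1 h2 rfl,
    E1_uvq _ t h1 h2 rfl]
  rw [show ((m:ℚ)+1/2)+1/2 = (((m:ℤ)+1 : ℤ):ℚ) from by push_cast; ring,
    show -((m:ℚ)+1/2)-1/2 = ((-((m:ℤ)+1) : ℤ):ℚ) from by push_cast; ring,
    show ((m:ℚ)+1/2)-1/2 = (m:ℚ) from by ring,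
    show -((m:ℚ)+1/2)+1/2 = -(m:ℚ) from by ring]
  simp only [Int.cast_inj, mhalf_iff]
  by_cases h4 : t = -((m:ℤ)+1)
  · have h3 : ¬ (t = (m:ℤ)+1) := by omega
    simp only [if_pos h4, if_neg h3]
    have hk : kexp ((m:ℚ)+1/2) ((t:ℚ)) = 0 := by
      subst h4
      rw [kexp, if_neg, if_neg]
      · ring
      · push_cast
        intro h
        have : -((m:ℤ)+1) = (m:ℤ)+1 := by exact_mod_cast (by linarith : (-((m:ℤ)+1):ℚ) = ((m:ℤ):ℚ)+1)
        omega
      · push_cast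
        intro h
        have : -((m:ℤ)+1) = (m:ℤ) := by exact_mod_cast (by linarith : (-((m:ℤ)+1):ℚ) = ((m:ℤ):ℚ))
        omega
    rw [hk]
    norm_num
  · simp only [if_neg h4, smul_zero, add_zero, zero_add]

lemma f1_uvq (m : ℕ) (hm : m + 1 ≤ r) {t : ℤ} {a : ℚ} (h1 : -(r:ℤ) ≤ t) (h2 : t ≤ r) (h3 : a = (t:ℚ)) :
    f1 r ((m:ℚ) + 1/2) (uvq r a) =
      (if t = -(m:ℤ) then uvq r (-(m:ℚ) - 1) else 0)
      + (if t = (m:ℤ) then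
          (pp ^ (if m = 0 then (1:ℤ) else 0)) • uvq r ((m:ℚ) + 1) else 0) := by
  subst h3
  rw [f1, LinearMap.add_apply, LinearMap.smul_apply, Module.End.mul_apply,
    F1_uvq _ t h1 h2 rfl, E1_uvq _ t h1 h2 rfl]
  rw [show -((m:ℚ)+1/2)+1/2 = ((-(m:ℤ) : ℤ):ℚ) from by push_cast; ring,
    show ((m:ℚ)+1/2)-1/2 = (((m:ℤ) : ℤ):ℚ) from by push_cast; ring,
    show -((m:ℚ)+1/2)-1/2 = -(m:ℚ)-1 from by ring,
    show ((m:ℚ)+1/2)+1/2 = (m:ℚ)+1 from by ring]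
  simp only [Int.cast_inj, mhalf_iff]
  by_cases h4 : t = (m:ℤ)
  · have h3 : kexp (-((m:ℚ)+1/2)) ((m:ℚ)+1) = 0 := by
      rw [kexp, if_neg, if_neg]
      · ring
      · intro h
        have hm0 : (0:ℚ) ≤ (m:ℚ) := Nat.cast_nonneg m
        linarith
      · intro h
        have hm0 : (0:ℚ) ≤ (m:ℚ) := Nat.cast_nonneg m
        linarith
    simp only [if_pos h4]
    rw [K1inv_uvq (-((m:ℚ)+1/2)) ((m:ℤ)+1) (by omega) (by omega) (by push_cast; ring),
      h3]
    norm_num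
  · simp only [if_neg h4, map_zero, smul_zero, add_zero, zero_add]

lemma kexp_symm (i a : ℚ) : kexp i a - kexp (-i) a = kexp i (-a) - kexp (-i) (-a) := by
  rw [kexp, kexp, kexp, kexp]
  simp only [
    show (-a = i - 1/2) ↔ (a = -i + 1/2) from ⟨fun h => by linarith, fun h => by linarith⟩,
    show (-a = i + 1/2) ↔ (a = -i - 1/2) from ⟨fun h => by linarith, fun h => by linarith⟩,
    show (-a = -i - 1/2) ↔ (a = i + 1/2) from ⟨fun h => by linarith, fun h => by linarith⟩,
    show (-a = -i + 1/2) ↔ (a = i - 1/2) from ⟨fun h => by linarith, fun h => by linarith⟩]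
  ring

lemma k1_uvq (i : ℚ) {t : ℤ} {a : ℚ} (h1 : -(r:ℤ) ≤ t) (h2 : t ≤ r) (h3 : a = (t:ℚ)) :
    k1 r i (uvq r a) = (qq ^ (kexp i a - kexp (-i) a)) • uvq r a := by
  subst h3
  rw [k1, Module.End.mul_apply, K1inv_uvq _ t h1 h2 rfl, map_smul,
    K1_uvq _ t h1 h2 rfl, smul_smul, ← zpow_add₀ qq_ne_zero]
  ring_nf

lemma k1inv_uvq (i : ℚ) {t : ℤ} {a : ℚ} (h1 : -(r:ℤ) ≤ t) (h2 : t ≤ r) (h3 : a = (t:ℚ)) :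
    k1inv r i (uvq r a) = (qq ^ (kexp (-i) a - kexp i a)) • uvq r a := by
  subst h3
  rw [k1inv, Module.End.mul_apply, K1_uvq _ t h1 h2 rfl, map_smul,
    K1inv_uvq _ t h1 h2 rfl, smul_smul, ← zpow_add₀ qq_ne_zero]
  ring_nf

end Aux2
section Aux3
variable {r : ℕ}

lemma half_add_iff (m n : ℕ) : ((m:ℚ) + 1/2 = (n:ℚ) + 1/2) ↔ (m = n) := by
  constructor
  · intro h; exact_mod_cast (by linarith : (m:ℚ) = (n:ℚ))
  · intro h; subst h; rfl

lemma half_sub_iff (m n : ℕ) : ((m:ℚ) + 1/2 = (n:ℚ) - 1/2) ↔ (m + 1 = n) := by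
  constructor
  · intro h; exact_mod_cast (by push_cast; linarith : ((m+1 : ℕ):ℚ) = (n:ℚ))
  · intro h; subst h; push_cast; ring

lemma fw_plus (m n : ℕ) (hm : m + 1 ≤ r) (hn1 : 1 ≤ n) (hn2 : n ≤ r) :
    f1 r ((m:ℚ) + 1/2) (wplus r n) =
      if (m:ℚ) + 1/2 = (n:ℚ) + 1/2 then uvq r (-(n:ℚ) - 1) + pp • uvq r ((n:ℚ) + 1)
      else 0 := by
  rw [wplus, map_add, map_smul,
    f1_uvq m hm (t := -(n:ℤ)) (by omega) (by omega) (by push_cast; ring),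
    f1_uvq m hm (t := (n:ℤ)) (by omega) (by omega) (by push_cast; ring)]
  simp only [half_add_iff]
  by_cases h : m = n
  · subst h
    rw [if_pos (rfl : (m:ℕ) = m), if_pos (rfl : -(m:ℤ) = -(m:ℤ)),
      if_neg (by omega : ¬ -(m:ℤ) = (m:ℤ)), if_neg (by omega : ¬ (m:ℤ) = -(m:ℤ)),
      if_pos (rfl : (m:ℤ) = (m:ℤ)), if_neg (by omega : ¬ m = 0)]
    simp only [zpow_zero, one_smul, add_zero, zero_add]
  · rw [if_neg h, if_neg (by omega : ¬ -(n:ℤ) = -(m:ℤ)), if_neg (by omega : ¬ -(n:ℤ) = (m:ℤ)),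
      if_neg (by omega : ¬ (n:ℤ) = -(m:ℤ)), if_neg (by omega : ¬ (n:ℤ) = (m:ℤ))]
    simp

lemma ew_plus (m n : ℕ) (hm : m + 1 ≤ r) (hn1 : 1 ≤ n) (hn2 : n ≤ r) :
    e1 r ((m:ℚ) + 1/2) (wplus r n) =
      if (m:ℚ) + 1/2 = (n:ℚ) - 1/2 then
        (pp ^ (-(if (m:ℚ) + 1/2 = 1/2 then (1:ℤ) else 0))) • uvq r (-(n:ℚ) + 1)
          + pp • uvq r ((n:ℚ) - 1)
      else 0 := by
  rw [wplus, map_add, map_smul,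
    e1_uvq m hm (t := -(n:ℤ)) (by omega) (by omega) (by push_cast; ring),
    e1_uvq m hm (t := (n:ℤ)) (by omega) (by omega) (by push_cast; ring)]
  simp only [half_sub_iff, mhalf_iff]
  by_cases h : m + 1 = n
  · rw [if_pos h, if_pos (by omega : -(n:ℤ) = -((m:ℤ)+1)), if_pos (by omega : (n:ℤ) = (m:ℤ)+1),
      if_neg (by omega : ¬ -(n:ℤ) = (m:ℤ)+1), if_neg (by omega : ¬ (n:ℤ) = -((m:ℤ)+1))]
    rw [show (-(n:ℚ) + 1) = -(m:ℚ) from by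
        have : (n:ℚ) = (m:ℚ) + 1 := by exact_mod_cast (by push_cast; omega : (n:ℤ) = (m:ℤ)+1)
        linarith,
      show ((n:ℚ) - 1) = (m:ℚ) from by
        have : (n:ℚ) = (m:ℚ) + 1 := by exact_mod_cast (by push_cast; omega : (n:ℤ) = (m:ℤ)+1)
        linarith]
    simp only [zero_add, add_zero, smul_zero]
  · rw [if_neg h, if_neg (by omega : ¬ -(n:ℤ) = (m:ℤ)+1), if_neg (by omega : ¬ -(n:ℤ) = -((m:ℤ)+1)),
      if_neg (by omega : ¬ (n:ℤ) = (m:ℤ)+1), if_neg (by omega : ¬ (n:ℤ) = -((m:ℤ)+1))]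
    simp

lemma fw_minus (m n : ℕ) (hm : m + 1 ≤ r) (hn1 : 1 ≤ n) (hn2 : n ≤ r) :
    f1 r ((m:ℚ) + 1/2) (wminus r n) =
      if (m:ℚ) + 1/2 = (n:ℚ) + 1/2 then uvq r (-(n:ℚ) - 1) - pp⁻¹ • uvq r ((n:ℚ) + 1)
      else 0 := by
  rw [wminus, map_sub, map_smul,
    f1_uvq m hm (t := -(n:ℤ)) (by omega) (by omega) (by push_cast; ring),
    f1_uvq m hm (t := (n:ℤ)) (by omega) (by omega) (by push_cast; ring)]
  simp only [half_add_iff]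
  by_cases h : m = n
  · subst h
    rw [if_pos (rfl : (m:ℕ) = m), if_pos (rfl : -(m:ℤ) = -(m:ℤ)),
      if_neg (by omega : ¬ -(m:ℤ) = (m:ℤ)), if_neg (by omega : ¬ (m:ℤ) = -(m:ℤ)),
      if_pos (rfl : (m:ℤ) = (m:ℤ)), if_neg (by omega : ¬ m = 0)]
    simp only [zpow_zero, one_smul, add_zero, zero_add]
  · rw [if_neg h, if_neg (by omega : ¬ -(n:ℤ) = -(m:ℤ)), if_neg (by omega : ¬ -(n:ℤ) = (m:ℤ)),
      if_neg (by omega : ¬ (n:ℤ) = -(m:ℤ)), if_neg (by omega : ¬ (n:ℤ) = (m:ℤ))]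
    simp

lemma ew_minus (m n : ℕ) (hm : m + 1 ≤ r) (hn1 : 1 ≤ n) (hn2 : n ≤ r) :
    e1 r ((m:ℚ) + 1/2) (wminus r n) =
      if (m:ℚ) + 1/2 = (n:ℚ) - 1/2 then
        (pp ^ (-(if (m:ℚ) + 1/2 = 1/2 then (1:ℤ) else 0))) • uvq r (-(n:ℚ) + 1)
          - pp⁻¹ • uvq r ((n:ℚ) - 1)
      else 0 := by
  rw [wminus, map_sub, map_smul,
    e1_uvq m hm (t := -(n:ℤ)) (by omega) (by omega) (by push_cast; ring),
    e1_uvq m hm (t := (n:ℤ)) (by omega) (by omega) (by push_cast; ring)]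
  simp only [half_sub_iff, mhalf_iff]
  by_cases h : m + 1 = n
  · rw [if_pos h, if_pos (by omega : -(n:ℤ) = -((m:ℤ)+1)), if_pos (by omega : (n:ℤ) = (m:ℤ)+1),
      if_neg (by omega : ¬ -(n:ℤ) = (m:ℤ)+1), if_neg (by omega : ¬ (n:ℤ) = -((m:ℤ)+1))]
    rw [show (-(n:ℚ) + 1) = -(m:ℚ) from by
        have : (n:ℚ) = (m:ℚ) + 1 := by exact_mod_cast (by push_cast; omega : (n:ℤ) = (m:ℤ)+1)
        linarith,
      show ((n:ℚ) - 1) = (m:ℚ) from by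
        have : (n:ℚ) = (m:ℚ) + 1 := by exact_mod_cast (by push_cast; omega : (n:ℤ) = (m:ℤ)+1)
        linarith]
    simp only [zero_add, add_zero, smul_zero, sub_zero, zero_sub]
  · rw [if_neg h, if_neg (by omega : ¬ -(n:ℤ) = (m:ℤ)+1), if_neg (by omega : ¬ -(n:ℤ) = -((m:ℤ)+1)),
      if_neg (by omega : ¬ (n:ℤ) = (m:ℤ)+1), if_neg (by omega : ¬ (n:ℤ) = -((m:ℤ)+1))]
    simp

lemma fu0 (m : ℕ) (hm : m + 1 ≤ r) :
    f1 r ((m:ℚ) + 1/2) (uvq r 0) =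
      if m = 0 then uvq r (-(1:ℚ)) + pp • uvq r 1 else 0 := by
  rw [f1_uvq m hm (t := 0) (by omega) (by omega) (by norm_num)]
  by_cases h : m = 0
  · subst h
    rw [if_pos rfl, if_pos (by omega : (0:ℤ) = -(0:ℕ)), if_pos (by omega : (0:ℤ) = ((0:ℕ):ℤ)),
      if_pos rfl]
    rw [show (-((0:ℕ):ℚ) - 1) = -(1:ℚ) from by push_cast; ring,
      show (((0:ℕ):ℚ) + 1) = (1:ℚ) from by push_cast; ring]
    rw [zpow_one]
  · rw [if_neg (by omega : ¬ (0:ℤ) = -(m:ℤ)), if_neg (by omega : ¬ (0:ℤ) = (m:ℤ))]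
    simp [h]

lemma eu0 (m : ℕ) (hm : m + 1 ≤ r) :
    e1 r ((m:ℚ) + 1/2) (uvq r 0) = 0 := by
  rw [e1_uvq m hm (t := 0) (by omega) (by omega) (by norm_num),
    if_neg (by omega : ¬ (0:ℤ) = (m:ℤ)+1), if_neg (by omega : ¬ (0:ℤ) = -((m:ℤ)+1))]
  simp

lemma k1_wplus (i : ℚ) (n : ℕ) (hn : n ≤ r) :
    k1 r i (wplus r n) = (qq ^ (kexp i (n:ℚ) - kexp (-i) (n:ℚ))) • wplus r n := by
  rw [wplus, map_add, map_smul,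
    k1_uvq i (t := -(n:ℤ)) (by omega) (by omega) (by push_cast; ring),
    k1_uvq i (t := (n:ℤ)) (by omega) (by omega) (by push_cast; ring),
    ← kexp_symm, smul_add, smul_comm]

lemma k1_wminus (i : ℚ) (n : ℕ) (hn : n ≤ r) :
    k1 r i (wminus r n) = (qq ^ (kexp i (n:ℚ) - kexp (-i) (n:ℚ))) • wminus r n := by
  rw [wminus, map_sub, map_smul,
    k1_uvq i (t := -(n:ℤ)) (by omega) (by omega) (by push_cast; ring),
    k1_uvq i (t := (n:ℤ)) (by omega) (by omega) (by push_cast; ring),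
    ← kexp_symm, smul_sub, smul_comm]

lemma k1inv_wplus (i : ℚ) (n : ℕ) (hn : n ≤ r) :
    k1inv r i (wplus r n) = (qq ^ (kexp (-i) (n:ℚ) - kexp i (n:ℚ))) • wplus r n := by
  rw [wplus, map_add, map_smul,
    k1inv_uvq i (t := -(n:ℤ)) (by omega) (by omega) (by push_cast; ring),
    k1inv_uvq i (t := (n:ℤ)) (by omega) (by omega) (by push_cast; ring),
    show kexp (-i) (-(n:ℚ)) - kexp i (-(n:ℚ)) = kexp (-i) (n:ℚ) - kexp i (n:ℚ) from by
      have := kexp_symm i (n:ℚ); omega,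
    smul_add, smul_comm]

lemma k1inv_wminus (i : ℚ) (n : ℕ) (hn : n ≤ r) :
    k1inv r i (wminus r n) = (qq ^ (kexp (-i) (n:ℚ) - kexp i (n:ℚ))) • wminus r n := by
  rw [wminus, map_sub, map_smul,
    k1inv_uvq i (t := -(n:ℤ)) (by omega) (by omega) (by push_cast; ring),
    k1inv_uvq i (t := (n:ℤ)) (by omega) (by omega) (by push_cast; ring),
    show kexp (-i) (-(n:ℚ)) - kexp i (-(n:ℚ)) = kexp (-i) (n:ℚ) - kexp i (n:ℚ) from by
      have := kexp_symm i (n:ℚ); omega,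
    smul_sub, smul_comm]

end Aux3
section Aux4
variable {r : ℕ}

lemma wplus_mem (n : ℕ) (h1 : 1 ≤ n) (h2 : n ≤ r) : wplus r n ∈ VplusO r :=
  Submodule.subset_span (Or.inr ⟨n, h1, h2, rfl⟩)

lemma u0_mem : uvq r 0 ∈ VplusO r :=
  Submodule.subset_span (Or.inl rfl)

lemma wminus_mem (n : ℕ) (h1 : 1 ≤ n) (h2 : n ≤ r) : wminus r n ∈ VminusO r :=
  Submodule.subset_span ⟨n, h1, h2, rfl⟩

lemma inv_plus (T : Module.End K2 (V1 r)) (h0 : T (uvq r 0) ∈ VplusO r)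
    (hw : ∀ n : ℕ, 1 ≤ n → n ≤ r → T (wplus r n) ∈ VplusO r) :
    ∀ x ∈ VplusO r, T x ∈ VplusO r := by
  intro x hx
  refine Submodule.span_induction ?_ ?_ ?_ ?_ hx
  · rintro y (rfl | ⟨n, h1, h2, rfl⟩)
    · exact h0
    · exact hw n h1 h2
  · simpa using Submodule.zero_mem _
  · intro a b _ _ ha hb; rw [map_add]; exact Submodule.add_mem _ ha hb
  · intro c a _ ha; rw [map_smul]; exact Submodule.smul_mem _ _ ha

lemma inv_minus (T : Module.End K2 (V1 r))
    (hw : ∀ n : ℕ, 1 ≤ n → n ≤ r → T (wminus r n) ∈ VminusO r) :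
    ∀ x ∈ VminusO r, T x ∈ VminusO r := by
  intro x hx
  refine Submodule.span_induction ?_ ?_ ?_ ?_ hx
  · rintro y ⟨n, h1, h2, rfl⟩
    exact hw n h1 h2
  · simpa using Submodule.zero_mem _
  · intro a b _ _ ha hb; rw [map_add]; exact Submodule.add_mem _ ha hb
  · intro c a _ ha; rw [map_smul]; exact Submodule.smul_mem _ _ ha

lemma ppsq_ne : pp ^ 2 + 1 ≠ 0 := by
  rw [pp, ← map_pow, ← map_one (algebraMap (MvPolynomial (Fin 2) ℚ) K2), ← map_add]
  simp only [ne_eq, IsFractionRing.to_map_eq_zero_iff]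
  intro h
  have h2 := congrArg (MvPolynomial.eval (fun _ => (0:ℚ))) h
  simp at h2

lemma pp_add_inv_ne : pp + pp⁻¹ ≠ 0 := by
  intro h
  apply ppsq_ne
  have := pp_ne_zero
  field_simp at h
  linear_combination h

end Aux4
section Aux5
variable {r : ℕ}

lemma uvq_coeff {a b : ℚ} (ka kb : ℤ) (ha1 : -(r:ℤ) ≤ ka) (ha2 : ka ≤ r) (ha3 : a = (ka:ℚ))
    (hb1 : -(r:ℤ) ≤ kb) (hb2 : kb ≤ r) (hb3 : b = (kb:ℚ)) :
    uvq r a (toII r b) = if ka = kb then 1 else 0 := by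
  rw [uvq, uv, Finsupp.single_apply]
  by_cases h : ka = kb
  · rw [if_pos h, if_pos (by rw [ha3, hb3, h])]
  · rw [if_neg h, if_neg]
    intro he
    apply h
    have hv := congrArg Subtype.val he
    rw [toII_val r ka ha1 ha2 ha3, toII_val r kb hb1 hb2 hb3, ha3, hb3] at hv
    exact_mod_cast hv

lemma plus_coeff : ∀ x ∈ VplusO r, ∀ n : ℕ, 1 ≤ n → n ≤ r →
    x (toII r ((n:ℚ))) = pp * x (toII r (-(n:ℚ))) := by
  intro x hx
  refine Submodule.span_induction ?_ ?_ ?_ ?_ hx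
  · rintro y (rfl | ⟨k, h1, h2, rfl⟩) n hn1 hn2
    · rw [uvq_coeff 0 (n:ℤ) (by omega) (by omega) (by norm_num) (by omega) (by omega) (by push_cast; ring),
        uvq_coeff 0 (-(n:ℤ)) (by omega) (by omega) (by norm_num) (by omega) (by omega) (by push_cast; ring),
        if_neg (by omega : ¬ (0:ℤ) = (n:ℤ)), if_neg (by omega : ¬ (0:ℤ) = -(n:ℤ))]
      ring
    · rw [wplus, Finsupp.add_apply, Finsupp.add_apply, Finsupp.smul_apply, Finsupp.smul_apply,
        smul_eq_mul, smul_eq_mul,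
        uvq_coeff (-(k:ℤ)) (n:ℤ) (by omega) (by omega) (by push_cast; ring) (by omega) (by omega) (by push_cast; ring),
        uvq_coeff ((k:ℤ)) (n:ℤ) (by omega) (by omega) (by push_cast; ring) (by omega) (by omega) (by push_cast; ring),
        uvq_coeff (-(k:ℤ)) (-(n:ℤ)) (by omega) (by omega) (by push_cast; ring) (by omega) (by omega) (by push_cast; ring),
        uvq_coeff ((k:ℤ)) (-(n:ℤ)) (by omega) (by omega) (by push_cast; ring) (by omega) (by omega) (by push_cast; ring),
        if_neg (by omega : ¬ -(k:ℤ) = (n:ℤ)), if_neg (by omega : ¬ (k:ℤ) = -(n:ℤ))]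
      by_cases h : (k:ℤ) = (n:ℤ)
      · rw [if_pos h, if_pos (by omega : -(k:ℤ) = -(n:ℤ))]; ring
      · rw [if_neg h, if_neg (by omega : ¬ -(k:ℤ) = -(n:ℤ))]; ring
  · intro n _ _; simp
  · intro a b _ _ ha hb n h1 h2
    rw [Finsupp.add_apply, Finsupp.add_apply, ha n h1 h2, hb n h1 h2]; ring
  · intro c a _ ha n h1 h2
    rw [Finsupp.smul_apply, Finsupp.smul_apply, smul_eq_mul, smul_eq_mul, ha n h1 h2]; ring

lemma minus_coeff : ∀ x ∈ VminusO r,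
    (∀ n : ℕ, 1 ≤ n → n ≤ r → x (toII r ((n:ℚ))) = -pp⁻¹ * x (toII r (-(n:ℚ)))) ∧
      x (toII r 0) = 0 := by
  intro x hx
  refine Submodule.span_induction ?_ ?_ ?_ ?_ hx
  · rintro y ⟨k, h1, h2, rfl⟩
    constructor
    · intro n hn1 hn2
      rw [wminus, Finsupp.sub_apply, Finsupp.sub_apply, Finsupp.smul_apply, Finsupp.smul_apply,
        smul_eq_mul, smul_eq_mul,
        uvq_coeff (-(k:ℤ)) (n:ℤ) (by omega) (by omega) (by push_cast; ring) (by omega) (by omega) (by push_cast; ring),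
        uvq_coeff ((k:ℤ)) (n:ℤ) (by omega) (by omega) (by push_cast; ring) (by omega) (by omega) (by push_cast; ring),
        uvq_coeff (-(k:ℤ)) (-(n:ℤ)) (by omega) (by omega) (by push_cast; ring) (by omega) (by omega) (by push_cast; ring),
        uvq_coeff ((k:ℤ)) (-(n:ℤ)) (by omega) (by omega) (by push_cast; ring) (by omega) (by omega) (by push_cast; ring),
        if_neg (by omega : ¬ -(k:ℤ) = (n:ℤ)), if_neg (by omega : ¬ (k:ℤ) = -(n:ℤ))]
      by_cases h : (k:ℤ) = (n:ℤ)
      · rw [if_pos h, if_pos (by omega : -(k:ℤ) = -(n:ℤ))]; ring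
      · rw [if_neg h, if_neg (by omega : ¬ -(k:ℤ) = -(n:ℤ))]; ring
    · rw [wminus, Finsupp.sub_apply, Finsupp.smul_apply, smul_eq_mul,
        uvq_coeff (-(k:ℤ)) 0 (by omega) (by omega) (by push_cast; ring) (by omega) (by omega) (by norm_num),
        uvq_coeff ((k:ℤ)) 0 (by omega) (by omega) (by push_cast; ring) (by omega) (by omega) (by norm_num),
        if_neg (by omega : ¬ -(k:ℤ) = (0:ℤ)), if_neg (by omega : ¬ (k:ℤ) = (0:ℤ))]
      ring
  · constructor
    · intro n _ _; simp
    · simp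
  · intro a b _ _ ha hb
    constructor
    · intro n h1 h2
      rw [Finsupp.add_apply, Finsupp.add_apply, ha.1 n h1 h2, hb.1 n h1 h2]; ring
    · rw [Finsupp.add_apply, ha.2, hb.2]; ring
  · intro c a _ ha
    constructor
    · intro n h1 h2
      rw [Finsupp.smul_apply, Finsupp.smul_apply, smul_eq_mul, smul_eq_mul, ha.1 n h1 h2]; ring
    · rw [Finsupp.smul_apply, ha.2, smul_eq_mul]; ring

end Aux5

set_option maxHeartbeats 2000000 in
/-- explicit action of the coideal operators on `u_0` and `w_n^±`, and the
resulting decomposition `V = V⁺ ⊕ V⁻` into invariant submodules (odd case). -/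
theorem coideal_action_on_w_odd (r : ℕ) (hr : 1 ≤ r) :
    f1 r (1/2) (uvq r 0) = uvq r (-1) + pp • uvq r 1 ∧
    (∀ i ∈ Ijset r, ∀ n : ℕ, 1 ≤ n → n ≤ r →
      f1 r i (wplus r n)
        = (if i = (n : ℚ) + 1/2 then uvq r (-(n : ℚ) - 1) + pp • uvq r ((n : ℚ) + 1) else 0) ∧
      e1 r i (wplus r n)
        = (if i = (n : ℚ) - 1/2 then
            (pp ^ (-(if i = 1/2 then (1:ℤ) else 0))) • uvq r (-(n : ℚ) + 1)
              + pp • uvq r ((n : ℚ) - 1)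
          else 0) ∧
      f1 r i (wminus r n)
        = (if i = (n : ℚ) + 1/2 then uvq r (-(n : ℚ) - 1) - pp⁻¹ • uvq r ((n : ℚ) + 1) else 0) ∧
      e1 r i (wminus r n)
        = (if i = (n : ℚ) - 1/2 then
            (pp ^ (-(if i = 1/2 then (1:ℤ) else 0))) • uvq r (-(n : ℚ) + 1)
              - pp⁻¹ • uvq r ((n : ℚ) - 1)
          else 0)) ∧
    (∀ x ∈ VplusO r, ∀ i ∈ Ijset r,
      e1 r i x ∈ VplusO r ∧ f1 r i x ∈ VplusO r ∧ k1 r i x ∈ VplusO r ∧ k1inv r i x ∈ VplusO r) ∧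
    (∀ x ∈ VminusO r, ∀ i ∈ Ijset r,
      e1 r i x ∈ VminusO r ∧ f1 r i x ∈ VminusO r ∧ k1 r i x ∈ VminusO r ∧
        k1inv r i x ∈ VminusO r) ∧
    VplusO r ⊓ VminusO r = ⊥ ∧ VplusO r ⊔ VminusO r = ⊤ := by

  refine ⟨?_, ?_, ?_, ?_, ?_, ?_⟩
  · -- f_{1/2} u_0
    rw [show (1/2 : ℚ) = ((0:ℕ):ℚ) + 1/2 from by norm_num, fu0 0 (by omega), if_pos rfl]
  · -- explicit actions
    rintro i ⟨m, hm, rfl⟩ n hn1 hn2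
    exact ⟨fw_plus m n hm hn1 hn2, ew_plus m n hm hn1 hn2, fw_minus m n hm hn1 hn2,
      ew_minus m n hm hn1 hn2⟩
  · -- V+ invariance
    intro x hx i hi
    obtain ⟨m, hm, rfl⟩ := hi
    refine ⟨inv_plus _ ?_ ?_ x hx, inv_plus _ ?_ ?_ x hx, inv_plus _ ?_ ?_ x hx,
      inv_plus _ ?_ ?_ x hx⟩
    · rw [eu0 m hm]; exact Submodule.zero_mem _
    · intro n h1 h2
      rw [ew_plus m n hm h1 h2]
      by_cases h : (m:ℚ) + 1/2 = (n:ℚ) - 1/2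
      · rw [if_pos h]
        have hn : n = m + 1 := by have := (half_sub_iff m n).mp h; omega
        subst hn
        rw [show (-(↑(m+1):ℚ) + 1) = -(m:ℚ) from by push_cast; ring,
          show ((↑(m+1):ℚ) - 1) = (m:ℚ) from by push_cast; ring]
        by_cases hm0 : m = 0
        · subst hm0
          rw [show (-((0:ℕ):ℚ)) = (0:ℚ) from by norm_num,
            show (((0:ℕ):ℚ)) = (0:ℚ) from by norm_num]
          exact Submodule.add_mem _ (Submodule.smul_mem _ _ u0_mem)
            (Submodule.smul_mem _ _ u0_mem)
        · rw [if_neg (fun hc => hm0 ((mhalf_iff m).mp hc)), neg_zero, zpow_zero, one_smul]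
          exact wplus_mem m (by omega) (by omega)
      · rw [if_neg h]; exact Submodule.zero_mem _
    · rw [fu0 m hm]
      split_ifs with h
      · rw [show uvq r (-(1:ℚ)) + pp • uvq r 1 = wplus r 1 from by
            rw [wplus, show (-((1:ℕ):ℚ)) = -(1:ℚ) from by norm_num,
              show (((1:ℕ):ℚ)) = (1:ℚ) from by norm_num]]
        exact wplus_mem 1 le_rfl (by omega)
      · exact Submodule.zero_mem _
    · intro n h1 h2
      rw [fw_plus m n hm h1 h2]
      split_ifs with h
      · have hmn : m = n := (half_add_iff m n).mp h
        rw [show uvq r (-(n:ℚ) - 1) + pp • uvq r ((n:ℚ) + 1) = wplus r (n+1) from by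
            rw [wplus, show (-(↑(n+1):ℚ)) = -(n:ℚ) - 1 from by push_cast; ring,
              show ((↑(n+1):ℚ)) = (n:ℚ) + 1 from by push_cast; ring]]
        exact wplus_mem (n+1) (by omega) (by omega)
      · exact Submodule.zero_mem _
    · rw [k1_uvq ((m:ℚ)+1/2) (t := 0) (by omega) (by omega) (by norm_num)]
      exact Submodule.smul_mem _ _ u0_mem
    · intro n h1 h2
      rw [k1_wplus _ n (by omega)]
      exact Submodule.smul_mem _ _ (wplus_mem n h1 h2)
    · rw [k1inv_uvq ((m:ℚ)+1/2) (t := 0) (by omega) (by omega) (by norm_num)]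
      exact Submodule.smul_mem _ _ u0_mem
    · intro n h1 h2
      rw [k1inv_wplus _ n (by omega)]
      exact Submodule.smul_mem _ _ (wplus_mem n h1 h2)
  · -- V- invariance
    intro x hx i hi
    obtain ⟨m, hm, rfl⟩ := hi
    refine ⟨inv_minus _ ?_ x hx, inv_minus _ ?_ x hx, inv_minus _ ?_ x hx,
      inv_minus _ ?_ x hx⟩
    · intro n h1 h2
      rw [ew_minus m n hm h1 h2]
      by_cases h : (m:ℚ) + 1/2 = (n:ℚ) - 1/2
      · rw [if_pos h]
        have hn : n = m + 1 := by have := (half_sub_iff m n).mp h; omega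
        subst hn
        rw [show (-(↑(m+1):ℚ) + 1) = -(m:ℚ) from by push_cast; ring,
          show ((↑(m+1):ℚ) - 1) = (m:ℚ) from by push_cast; ring]
        by_cases hm0 : m = 0
        · subst hm0
          rw [show (-((0:ℕ):ℚ)) = (0:ℚ) from by norm_num,
            show (((0:ℕ):ℚ)) = (0:ℚ) from by norm_num,
            if_pos (by norm_num : (0:ℚ) + 1/2 = 1/2), zpow_neg_one, sub_self]
          exact Submodule.zero_mem _
        · rw [if_neg (fun hc => hm0 ((mhalf_iff m).mp hc)), neg_zero, zpow_zero, one_smul]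
          exact wminus_mem m (by omega) (by omega)
      · rw [if_neg h]; exact Submodule.zero_mem _
    · intro n h1 h2
      rw [fw_minus m n hm h1 h2]
      split_ifs with h
      · have hmn : m = n := (half_add_iff m n).mp h
        rw [show uvq r (-(n:ℚ) - 1) - pp⁻¹ • uvq r ((n:ℚ) + 1) = wminus r (n+1) from by
            rw [wminus, show (-(↑(n+1):ℚ)) = -(n:ℚ) - 1 from by push_cast; ring,
              show ((↑(n+1):ℚ)) = (n:ℚ) + 1 from by push_cast; ring]]
        exact wminus_mem (n+1) (by omega) (by omega)
      · exact Submodule.zero_mem _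
    · intro n h1 h2
      rw [k1_wminus _ n (by omega)]
      exact Submodule.smul_mem _ _ (wminus_mem n h1 h2)
    · intro n h1 h2
      rw [k1inv_wminus _ n (by omega)]
      exact Submodule.smul_mem _ _ (wminus_mem n h1 h2)
  · -- inf = ⊥
    rw [eq_bot_iff]
    rintro x ⟨hxp, hxm⟩
    have h1 := plus_coeff x hxp
    obtain ⟨h2, h3⟩ := minus_coeff x hxm
    have key : ∀ n : ℕ, 1 ≤ n → n ≤ r →
        x (toII r (-(n:ℚ))) = 0 ∧ x (toII r ((n:ℚ))) = 0 := by
      intro n a b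
      have e1' := h1 n a b
      have e2 := h2 n a b
      have hz0 : (pp + pp⁻¹) * x (toII r (-(n:ℚ))) = 0 := by linear_combination e2 - e1'
      have hz : x (toII r (-(n:ℚ))) = 0 := by
        rcases mul_eq_zero.mp hz0 with h | h
        · exact absurd h pp_add_inv_ne
        · exact h
      exact ⟨hz, by rw [e1', hz, mul_zero]⟩
    rw [Submodule.mem_bot]
    ext b
    obtain ⟨k, hk1, hk2, hk3⟩ := b.2
    have hb : b = toII r ((k:ℤ):ℚ) :=
      Subtype.ext (by rw [toII_val r k hk1 hk2 rfl]; exact hk3)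
    rw [Finsupp.coe_zero, Pi.zero_apply, hb]
    rcases lt_trichotomy k 0 with hk | hk | hk
    · set n : ℕ := (-k).toNat with hn
      have hnk : ((n:ℕ):ℤ) = -k := Int.toNat_of_nonneg (by omega)
      rw [show ((k:ℤ):ℚ) = -((n:ℕ):ℚ) from by
          rw [show ((n:ℕ):ℚ) = ((((n:ℕ):ℤ)):ℚ) from by push_cast; ring, hnk]; push_cast; ring]
      exact (key n (by omega) (by omega)).1
    · rw [show ((k:ℤ):ℚ) = (0:ℚ) from by rw [hk]; norm_num]
      exact h3
    · set n : ℕ := k.toNat with hn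
      have hnk : ((n:ℕ):ℤ) = k := Int.toNat_of_nonneg (by omega)
      rw [show ((k:ℤ):ℚ) = ((n:ℕ):ℚ) from by
          rw [show ((n:ℕ):ℚ) = ((((n:ℕ):ℤ)):ℚ) from by push_cast; ring, hnk]]
      exact (key n (by omega) (by omega)).2
  · -- sup = ⊤
    rw [eq_top_iff]
    intro x _
    have hun : ∀ n : ℕ, 1 ≤ n → n ≤ r → uvq r ((n:ℚ)) ∈ VplusO r ⊔ VminusO r := by
      intro n a b
      have hsub : wplus r n - wminus r n = (pp + pp⁻¹) • uvq r ((n:ℚ)) := by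
        rw [wplus, wminus, add_smul]
        abel
      have hrw : uvq r ((n:ℚ)) = (pp + pp⁻¹)⁻¹ • wplus r n - (pp + pp⁻¹)⁻¹ • wminus r n := by
        rw [← smul_sub, hsub, smul_smul, inv_mul_cancel₀ pp_add_inv_ne, one_smul]
      rw [hrw]
      exact Submodule.sub_mem _
        (Submodule.mem_sup_left (Submodule.smul_mem _ _ (wplus_mem n a b)))
        (Submodule.mem_sup_right (Submodule.smul_mem _ _ (wminus_mem n a b)))
    have hmem : ∀ b : IIdx r, uv b ∈ VplusO r ⊔ VminusO r := by
      intro b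
      obtain ⟨k, hk1, hk2, hk3⟩ := b.2
      have hb : b = toII r ((k:ℤ):ℚ) :=
        Subtype.ext (by rw [toII_val r k hk1 hk2 rfl]; exact hk3)
      have hbv : uv b = uvq r ((k:ℤ):ℚ) := by rw [hb]; rfl
      rw [hbv]
      rcases lt_trichotomy k 0 with hk | hk | hk
      · set n : ℕ := (-k).toNat with hn
        have hnk : ((n:ℕ):ℤ) = -k := Int.toNat_of_nonneg (by omega)
        rw [show ((k:ℤ):ℚ) = -((n:ℕ):ℚ) from by
            rw [show ((n:ℕ):ℚ) = ((((n:ℕ):ℤ)):ℚ) from by push_cast; ring, hnk]; push_cast; ring]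
        have h2 : uvq r (-(n:ℚ)) = wplus r n - pp • uvq r ((n:ℚ)) := by
          rw [wplus]; abel
        rw [h2]
        exact Submodule.sub_mem _
          (Submodule.mem_sup_left (wplus_mem n (by omega) (by omega)))
          (Submodule.smul_mem _ _ (hun n (by omega) (by omega)))
      · rw [show ((k:ℤ):ℚ) = (0:ℚ) from by rw [hk]; norm_num]
        exact Submodule.mem_sup_left u0_mem
      · set n : ℕ := k.toNat with hn
        have hnk : ((n:ℕ):ℤ) = k := Int.toNat_of_nonneg (by omega)
        rw [show ((k:ℤ):ℚ) = ((n:ℕ):ℚ) from by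
            rw [show ((n:ℕ):ℚ) = ((((n:ℕ):ℤ)):ℚ) from by push_cast; ring, hnk]]
        exact hun n (by omega) (by omega)
    rw [← Finsupp.sum_single x, Finsupp.sum]
    refine Submodule.sum_mem _ ?_
    intro b _
    rw [show Finsupp.single b (x b) = (x b) • uv b from by
        rw [uv, Finsupp.smul_single, smul_eq_mul, mul_one]]
    exact Submodule.smul_mem _ _ (hmem b)
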